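/- Let γ: [0,∞) → (0,∞) be C^2 with γ(0) = γ'(0) = 1, γ increasing and γ'' < 0, and set γ̃(s) = γ(s)∫_s^t dτ/γ(τ)^2 for s ∈ [0,t]. Then γ̃(s) ≤ (t-s)/γ(t) for all s ∈ [0,t]. -/

import Mathlib

open Set intervalIntegral

theorem auxiliary_gamma_tilde_bound
    (γ : ℝ → ℝ) (hγC2 : ContDiff ℝ 2 γ)
    (hγpos : ∀ s : ℝ, 0 ≤ s → 0 < γ s)
    (hγ0 : γ 0 = 1) (hγ'0 : deriv γ 0 = 1)
    (hγmono : MonotoneOn γ (Set.Ici 0))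
    (hγ'' : ∀ s : ℝ, 0 ≤ s → deriv (deriv γ) s < 0)
    (t : ℝ) (ht : 0 < t) :
    ∀ s ∈ Set.Icc 0 t, γ s * (∫ τ in s..t, (γ τ) ^ (-2 : ℤ)) ≤ (t - s) / γ t := by
  have hγcont : Continuous γ := hγC2.continuous
  -- positivity of γ on a neighborhood of [0, ∞)
  have hev : ∀ᶠ x in nhds (0:ℝ), 0 < γ x := by
    have := (hγcont.tendsto 0).eventually (eventually_gt_nhds (by norm_num [hγ0] : (0:ℝ) < γ 0))
    simpa using this
  obtain ⟨ε, hε, hball⟩ := Metric.eventually_nhds_iff.mp hev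
  set U : Set ℝ := Set.Ioi (-ε) with hU
  have hUopen : IsOpen U := isOpen_Ioi
  have hpos : ∀ x ∈ U, 0 < γ x := by
    intro x hx
    rcases le_or_gt 0 x with h | h
    · exact hγpos x h
    · exact hball (by simpa [Real.dist_eq, abs_of_neg h] using by linarith [hx.out])
  have htU : t ∈ U := by simp [hU]; linarith
  have hIccU : Icc (0:ℝ) t ⊆ U := fun x hx => by simp [hU]; linarith [hx.1]
  -- the integrand
  set g : ℝ → ℝ := fun τ => γ τ ^ (-2 : ℤ) with hg
  have hginv : ∀ τ, g τ = (γ τ * γ τ)⁻¹ := by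
    intro τ; simp only [hg]; rw [zpow_neg, zpow_two]
  have hgcont : ContinuousOn g U := by
    intro x hx
    exact ((hγcont.continuousAt (x := x)).zpow₀ _ (Or.inl (hpos x hx).ne')).continuousWithinAt
  have hgpos : ∀ x ∈ U, 0 < g x := fun x hx => by
    rw [hginv]; exact inv_pos.mpr (mul_pos (hpos x hx) (hpos x hx))
  -- integrability
  have hint : ∀ x ∈ U, IntervalIntegrable g MeasureTheory.volume x t := by
    intro x hx
    apply ContinuousOn.intervalIntegrable
    apply hgcont.mono
    intro y hy
    rcases le_total x t with h | h
    · simp only [uIcc_of_le h] at hy; simp [hU]; linarith [hy.1, hx.out]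
    · simp only [uIcc_of_ge h] at hy; simp [hU]; linarith [hy.1, htU.out]
  -- the primitive I s = ∫ s..t g
  set I : ℝ → ℝ := fun s => ∫ τ in s..t, g τ with hI
  have hIderiv : ∀ x ∈ U, HasDerivAt I (-(g x)) x := by
    intro x hx
    exact integral_hasDerivAt_left (hint x hx)
      (hgcont.stronglyMeasurableAtFilter hUopen x hx)
      (hgcont.continuousAt (hUopen.mem_nhds hx))
  -- derivatives of γ
  have hγdiff : Differentiable ℝ γ := hγC2.differentiable (by norm_num)
  have hγ'C1 : ContDiff ℝ 1 (deriv γ) := (contDiff_succ_iff_deriv.mp (show ContDiff ℝ (1+1) γ by norm_num; exact hγC2)).2.2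
  have hγ'diff : Differentiable ℝ (deriv γ) := hγ'C1.differentiable (by norm_num)
  -- the functions F and G
  set G : ℝ → ℝ := fun s => deriv γ s * I s - (γ s)⁻¹ + (γ t)⁻¹ with hGdef
  set F : ℝ → ℝ := fun s => γ s * I s + s * (γ t)⁻¹ with hFdef
  have hFderiv : ∀ x ∈ U, HasDerivAt F (G x) x := by
    intro x hx
    have h1 : HasDerivAt (fun s => γ s * I s) (deriv γ x * I x + γ x * (-(g x))) x :=
      ((hγdiff x).hasDerivAt).mul (hIderiv x hx)
    have h2 : HasDerivAt (fun s : ℝ => s * (γ t)⁻¹) ((γ t)⁻¹) x := by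
      simpa using (hasDerivAt_id x).mul_const ((γ t)⁻¹)
    have := h1.add h2
    convert this using 1
    case e'_4 => rfl
    case e'_5 => rfl
    case e'_8 => rfl
    rw [hGdef]
    have hγx := (hpos x hx).ne'
    rw [hginv]
    field_simp
    ring
  have hGderiv : ∀ x ∈ U, HasDerivAt G (deriv (deriv γ) x * I x) x := by
    intro x hx
    have h1 : HasDerivAt (fun s => deriv γ s * I s)
        (deriv (deriv γ) x * I x + deriv γ x * (-(g x))) x :=
      ((hγ'diff x).hasDerivAt).mul (hIderiv x hx)
    have h2 : HasDerivAt (fun s => (γ s)⁻¹) (-(deriv γ x) / (γ x) ^ 2) x :=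
      ((hγdiff x).hasDerivAt).inv (hpos x hx).ne'
    have h3 := (h1.sub h2).add_const ((γ t)⁻¹)
    convert h3 using 1
    case e'_4 => rfl
    case e'_5 => rfl
    case e'_8 => rfl
    have hγx := (hpos x hx).ne'
    rw [hginv]
    field_simp
    ring
  -- G is antitone on [0, t]
  have hGcont : ContinuousOn G (Icc 0 t) := fun x hx =>
    ((hGderiv x (hIccU hx)).differentiableAt.continuousAt).continuousWithinAt
  have hInonneg : ∀ x ∈ Icc (0:ℝ) t, 0 ≤ I x := by
    intro x hx
    apply integral_nonneg hx.2
    intro u hu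
    exact (hgpos u (by simp [hU]; linarith [hu.1, hx.1])).le
  have hGanti : AntitoneOn G (Icc 0 t) := by
    apply antitoneOn_of_deriv_nonpos (convex_Icc 0 t) hGcont
    · intro x hx
      rw [interior_Icc] at hx
      exact ((hGderiv x (hIccU (Ioo_subset_Icc_self hx))).differentiableAt).differentiableWithinAt
    · intro x hx
      rw [interior_Icc] at hx
      rw [(hGderiv x (hIccU (Ioo_subset_Icc_self hx))).deriv]
      exact mul_nonpos_of_nonpos_of_nonneg (hγ'' x hx.1.le).le
        (hInonneg x (Ioo_subset_Icc_self hx))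
  have hGt : G t = 0 := by
    simp [hGdef, hI, integral_same]
  have hGnonneg : ∀ x ∈ Icc (0:ℝ) t, 0 ≤ G x := by
    intro x hx
    have := hGanti hx (right_mem_Icc.mpr ht.le) hx.2
    linarith [hGt ▸ this]
  -- F is monotone on [0, t]
  have hFcont : ContinuousOn F (Icc 0 t) := fun x hx =>
    ((hFderiv x (hIccU hx)).differentiableAt.continuousAt).continuousWithinAt
  have hFmono : MonotoneOn F (Icc 0 t) := by
    apply monotoneOn_of_deriv_nonneg (convex_Icc 0 t) hFcont
    · intro x hx
      rw [interior_Icc] at hx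
      exact ((hFderiv x (hIccU (Ioo_subset_Icc_self hx))).differentiableAt).differentiableWithinAt
    · intro x hx
      rw [interior_Icc] at hx
      rw [(hFderiv x (hIccU (Ioo_subset_Icc_self hx))).deriv]
      exact hGnonneg x (Ioo_subset_Icc_self hx)
  intro s hs
  have hFle := hFmono hs (right_mem_Icc.mpr ht.le) hs.2
  have hFt : F t = t * (γ t)⁻¹ := by simp [hFdef, hI, integral_same]
  have : γ s * I s + s * (γ t)⁻¹ ≤ t * (γ t)⁻¹ := by rw [← hFt]; exact hFle
  have hγt := hγpos t ht.le
  rw [div_eq_mul_inv]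
  calc γ s * I s ≤ t * (γ t)⁻¹ - s * (γ t)⁻¹ := by linarith
    _ = (t - s) * (γ t)⁻¹ := by ring
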